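/- arXiv:2303.16995 — 2 statements merged into one kernel-verified Lean document; each statement's English description precedes it below -/
import Mathlib

section
/- If a red/blue coloring φ of the triples of [N] contains no blue tight monotone path on n vertices, then the coloring χ of pairs of [N], where χ(u,v) is the number of vertices in the longest blue tight monotone path ending with the pair (u,v), takes values in {2, 3, ..., n-1}, and every non-increasing triple with respect to χ is colored red by φ. -/
/-- A triple `u < v < w` is non-increasing with respect to `χ` if
`χ(u,v) = χ(u,w) ≥ χ(v,w)` or `χ(u,v) ≥ χ(v,w) = χ(u,w)`. -/
def NonIncTriple (χ : ℕ → ℕ → ℕ) (u v w : ℕ) : Prop :=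
  (χ u v = χ u w ∧ χ v w ≤ χ u w) ∨ (χ v w = χ u w ∧ χ v w ≤ χ u v)

/-- There is a blue (`false`-colored) tight monotone path with `m` vertices inside
`{1,...,N}` ending at the pair `(u, v)`. -/
def BlueTightPathEnd (N : ℕ) (φ : ℕ → ℕ → ℕ → Bool) (m u v : ℕ) : Prop :=
  2 ≤ m ∧ ∃ w : ℕ → ℕ, (∀ i < m, w i ∈ Finset.Icc 1 N) ∧
    (∀ i j, i < j → j < m → w i < w j) ∧
    w (m - 2) = u ∧ w (m - 1) = v ∧
    ∀ i, i + 2 < m → φ (w i) (w (i + 1)) (w (i + 2)) = false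

/-- If `φ` has no blue tight monotone path on `n` vertices, and `χ(u,v)` is the number
of vertices of the longest blue tight monotone path ending at `(u,v)`, then `χ` takes
values in `{2, ..., n-1}` and every non-increasing triple with respect to `χ` is
colored red by `φ`. -/
theorem noninc_triples_are_red (N n : ℕ) (φ : ℕ → ℕ → ℕ → Bool) (χ : ℕ → ℕ → ℕ)
    (hno : ¬ ∃ v : ℕ → ℕ, (∀ i < n, v i ∈ Finset.Icc 1 N) ∧
      (∀ i j, i < j → j < n → v i < v j) ∧
      ∀ i, i + 2 < n → φ (v i) (v (i + 1)) (v (i + 2)) = false)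
    (hχ : ∀ u v, u ∈ Finset.Icc 1 N → v ∈ Finset.Icc 1 N → u < v →
      IsGreatest {m | BlueTightPathEnd N φ m u v} (χ u v)) :
    (∀ u v, u ∈ Finset.Icc 1 N → v ∈ Finset.Icc 1 N → u < v →
      2 ≤ χ u v ∧ χ u v ≤ n - 1) ∧
    (∀ u v w, u ∈ Finset.Icc 1 N → v ∈ Finset.Icc 1 N → w ∈ Finset.Icc 1 N →
      u < v → v < w → NonIncTriple χ u v w → φ u v w = true) := by
  constructor
  · intro u v hu hv huv
    obtain ⟨⟨h2, p, hin, hmono, he1, he2, hpb⟩, hub⟩ := hχ u v hu hv huv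
    refine ⟨h2, ?_⟩
    by_contra hle
    push_neg at hle
    have hn : n ≤ χ u v := by omega
    exact hno ⟨p, fun i hi => hin i (lt_of_lt_of_le hi hn),
      fun i j hij hj => hmono i j hij (lt_of_lt_of_le hj hn),
      fun i hi => hpb i (lt_of_lt_of_le hi hn)⟩
  · intro u v w hu hv hw huv hvw hni
    by_contra hred
    have hblue : φ u v w = false := by
      cases h : φ u v w with
      | false => rfl
      | true => exact absurd h hred
    obtain ⟨⟨h2, p, hin, hmono, he1, he2, hpb⟩, _⟩ := hχ u v hu hv huv
    set m := χ u v with hm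
    have hend : BlueTightPathEnd N φ (m + 1) v w := by
      refine ⟨by omega, fun i => if i = m then w else p i, ?_, ?_, ?_, ?_, ?_⟩
      · intro i hi
        by_cases h : i = m
        · simp only [if_pos h]; exact hw
        · simp only [if_neg h]; exact hin i (by omega)
      · intro i j hij hj
        by_cases hjm : j = m
        · have hi' : i ≠ m := by omega
          simp only [if_neg hi', if_pos hjm]
          have hple : p i ≤ p (m - 1) := by
            rcases eq_or_lt_of_le (show i ≤ m - 1 by omega) with h | h
            · exact le_of_eq (by rw [h])
            · exact le_of_lt (hmono i (m - 1) h (by omega))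
          calc p i ≤ v := he2 ▸ hple
            _ < w := hvw
        · have hi' : i ≠ m := by omega
          simp only [if_neg hi', if_neg hjm]
          exact hmono i j hij (by omega)
      · rw [show m + 1 - 2 = m - 1 by omega]
        simp only [if_neg (show m - 1 ≠ m by omega)]
        exact he2
      · simp
      · intro i hi
        by_cases h : i + 2 = m
        · have h1 : i ≠ m := by omega
          have h2' : i + 1 ≠ m := by omega
          simp only [if_neg h1, if_neg h2', if_pos h]
          rw [show i = m - 2 by omega, show (m - 2) + 1 = m - 1 by omega, he1, he2]
          exact hblue
        · have h1 : i ≠ m := by omega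
          have h2' : i + 1 ≠ m := by omega
          simp only [if_neg h1, if_neg h2', if_neg h]
          exact hpb i (by omega)
    have hge := (hχ v w hv hw hvw).2 hend
    rcases hni with ⟨heq, hle⟩ | ⟨heq, hle⟩ <;> omega
end

section
/- Let S = {u_1 < ... < u_{i-1} < b < u_{i+1} < ... < u_{s-1}} and S' = {u_1 < ... < u_{i-1} < b' < u_{i+1} < ... < u_{s-1}} be two non-increasing sets with the same color pattern with respect to an ordered-color pair coloring χ, with b < b'. Let κ_{i-1} = χ(u_{i-1}, b) (or n if i = 1) and κ_i = χ(b, u_{i+1}) (or the minimum color if i = s-1). If κ_{i-1} ≥ χ(b, b') ≥ κ_i, then the set T = {u_1, ..., u_{i-1}, b, b', u_{i+1}, ..., u_{s-1}} of size s is non-increasing. -/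
/-- Let `S = (w 1 < ... < w (s-1))` and `S' = (w' 1 < ... < w' (s-1))` be
non-increasing sets with the same color pattern, agreeing except at position `i`,
where `w i = b < b' = w' i`.  Let `a = κ_{i-1}` (which is `χ(w (i-1), b)`, or `n` if
`i = 1`) and `c = κ_i` (which is `χ(b, w (i+1))`, or `1` if `i = s-1`).  If
`a ≥ χ(b, b') ≥ c`, then `T = S ∪ {b'}` (of size `s`) is non-increasing. -/
theorem extend_noninc_set (s n i : ℕ) (hs : 2 ≤ s) (hi1 : 1 ≤ i) (hi2 : i ≤ s - 1)
    (χ : ℕ → ℕ → ℕ) (hχ : ∀ x y, χ x y ∈ Finset.Icc 1 n)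
    (b b' : ℕ) (hbb : b < b')
    (w w' : ℕ → ℕ) (hwi : w i = b) (hw'i : w' i = b')
    (hagree : ∀ j, j ≠ i → w j = w' j)
    (hw : ∀ j k, 1 ≤ j → j < k → k ≤ s - 1 → w j < w k)
    (hw' : ∀ j k, 1 ≤ j → j < k → k ≤ s - 1 → w' j < w' k)
    (hSnon : ∀ j k l, 1 ≤ j → j < k → k < l → l ≤ s - 1 →
      NonIncTriple χ (w j) (w k) (w l))
    (hS'non : ∀ j k l, 1 ≤ j → j < k → k < l → l ≤ s - 1 →
      NonIncTriple χ (w' j) (w' k) (w' l))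
    (hpat : ∀ j k, 1 ≤ j → j < k → k ≤ s - 1 → χ (w j) (w k) = χ (w' j) (w' k))
    (a c : ℕ)
    (ha : (i = 1 ∧ a = n) ∨ (2 ≤ i ∧ a = χ (w (i - 1)) b))
    (hc : (i = s - 1 ∧ c = 1) ∨ (i < s - 1 ∧ c = χ b (w (i + 1))))
    (hmid : c ≤ χ b b' ∧ χ b b' ≤ a) :
    ∀ x ∈ {x : ℕ | x = b' ∨ ∃ j, 1 ≤ j ∧ j ≤ s - 1 ∧ x = w j},
    ∀ y ∈ {x : ℕ | x = b' ∨ ∃ j, 1 ≤ j ∧ j ≤ s - 1 ∧ x = w j},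
    ∀ z ∈ {x : ℕ | x = b' ∨ ∃ j, 1 ≤ j ∧ j ≤ s - 1 ∧ x = w j},
      x < y → y < z → NonIncTriple χ x y z := by
  intro x hx y hy z hz hxy hyz
  simp only [Set.mem_setOf_eq] at hx hy hz
  have hile : i ≤ s - 1 := hi2
  have hlt : ∀ k, 1 ≤ k → k ≤ i → w k < b' := by
    intro k h1 h2
    rcases eq_or_lt_of_le h2 with h | h
    · subst h; rw [hwi]; exact hbb
    · exact lt_trans (by rw [← hwi]; exact hw k i h1 h hile) hbb
  have hgt : ∀ k, i < k → k ≤ s - 1 → b' < w k := by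
    intro k h1 h2
    rw [hagree k (by omega), ← hw'i]
    exact hw' i k hi1 h1 h2
  have hidx : ∀ j k, 1 ≤ j → j ≤ s - 1 → 1 ≤ k → k ≤ s - 1 → w j < w k → j < k := by
    intro j k hj1 hj2 hk1 hk2 hjk
    by_contra h
    push_neg at h
    rcases eq_or_lt_of_le h with h' | h'
    · subst h'; exact lt_irrefl _ hjk
    · exact lt_asymm hjk (hw k j hk1 h' hj2)
  have L1 : ∀ j, 1 ≤ j → j < i → χ (w (i - 1)) b ≤ χ (w j) b := by
    intro j h1 h2
    rcases eq_or_lt_of_le (by omega : j ≤ i - 1) with h | h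
    · subst h; exact le_refl _
    · have := hSnon j (i - 1) i h1 h (by omega) hile
      rw [hwi] at this
      rcases this with ⟨h4, h5⟩ | ⟨h4, h5⟩
      · exact h5
      · exact le_of_eq h4
  have L2 : ∀ l, i < l → l ≤ s - 1 → χ b (w l) ≤ χ b (w (i + 1)) := by
    intro l h1 h2
    rcases eq_or_lt_of_le (by omega : i + 1 ≤ l) with h | h
    · rw [h]
    · have := hSnon i (i + 1) l hi1 (by omega) h h2
      rw [hwi] at this
      rcases this with ⟨h4, h5⟩ | ⟨h4, h5⟩
      · exact le_of_eq h4.symm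
      · exact h4 ▸ h5
  rcases hx with rfl | ⟨j, hj1, hj2, rfl⟩
  · -- x = b'
    rcases hy with rfl | ⟨k, hk1, hk2, rfl⟩
    · exact absurd hxy (lt_irrefl _)
    have hik : i < k := by
      by_contra h; push_neg at h
      exact absurd (hlt k hk1 h) (lt_asymm hxy)
    rcases hz with rfl | ⟨l, hl1, hl2, rfl⟩
    · exact absurd hyz (not_lt.2 (le_of_lt hxy))
    have hkl : k < l := hidx k l hk1 hk2 hl1 hl2 hyz
    have := hS'non i k l hi1 hik hkl hl2
    rw [hw'i, ← hagree k (by omega), ← hagree l (by omega)] at this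
    exact this
  · rcases hy with rfl | ⟨k, hk1, hk2, rfl⟩
    · -- y = b'
      have hji : j ≤ i := by
        by_contra h; push_neg at h
        exact absurd (hgt j h hj2) (lt_asymm hxy)
      rcases hz with rfl | ⟨l, hl1, hl2, rfl⟩
      · exact absurd hyz (lt_irrefl _)
      have hil : i < l := by
        by_contra h; push_neg at h
        exact absurd (hlt l hl1 h) (lt_asymm hyz)
      rcases eq_or_lt_of_le hji with rfl | hji'
      · -- j = i : triple (b, b', w l)
        rw [hwi]
        have heq : χ y (w l) = χ b (w l) := by
          rw [← hwi, hpat j l hi1 hil hl2, hw'i, ← hagree l (by omega)]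
        right
        refine ⟨heq, ?_⟩
        rcases hc with ⟨h1, _⟩ | ⟨_, hc2⟩
        · omega
        · calc χ y (w l) = χ b (w l) := heq
            _ ≤ χ b (w (j + 1)) := L2 l hil hl2
            _ = c := hc2.symm
            _ ≤ χ b y := hmid.1
      · -- j < i
        have := hS'non j i l hj1 hji' hil hl2
        rw [hw'i, ← hagree j (by omega), ← hagree l (by omega)] at this
        exact this
    · -- y = w k
      have hjk : j < k := hidx j k hj1 hj2 hk1 hk2 hxy
      rcases hz with rfl | ⟨l, hl1, hl2, rfl⟩
      · -- z = b'
        have hki : k ≤ i := by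
          by_contra h; push_neg at h
          exact absurd (hgt k h hk2) (lt_asymm hyz)
        rcases eq_or_lt_of_le hki with rfl | hki'
        · -- k = i : triple (w j, b, b')
          rw [hwi]
          have heq : χ (w j) b = χ (w j) z := by
            rw [← hwi, hpat j k hj1 hjk hile, ← hagree j (by omega), hw'i]
          left
          refine ⟨heq, ?_⟩
          rcases ha with ⟨h1, _⟩ | ⟨_, ha2⟩
          · omega
          · calc χ b z ≤ a := hmid.2
              _ = χ (w (k - 1)) b := ha2
              _ ≤ χ (w j) b := L1 j hj1 hjk
              _ = χ (w j) z := heq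
        · have := hS'non j k i hj1 hjk hki' hile
          rw [hw'i, ← hagree j (by omega), ← hagree k (by omega)] at this
          exact this
      · have hkl : k < l := hidx k l hk1 hk2 hl1 hl2 hyz
        exact hSnon j k l hj1 hjk hkl hl2
end
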